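/- (Hibi) A full-dimensional rational convex polytope P ⊆ R^d is dual-integral if and only if #(nP ∩ Z^d) = #(int((n+1)P) ∩ Z^d) for all natural numbers n. -/

import Mathlib

open Pointwise

/-- The polar dual of a set `S ⊆ ℝ^d` : `S* = {x | ⟨x, s⟩ ≤ 1 for all s ∈ S}`. -/
def polarDual {d : ℕ} (S : Set (Fin d → ℝ)) : Set (Fin d → ℝ) :=
  {x | ∀ s ∈ S, ∑ i, x i * s i ≤ 1}

/-- The canonical embedding `ℤ^d → ℝ^d`. -/
def latCast {d : ℕ} (v : Fin d → ℤ) : Fin d → ℝ := fun i => (v i : ℝ)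

namespace HibiAux

open Set Matrix

variable {d : ℕ}

lemma mem_polarDual {S : Set (Fin d → ℝ)} {y : Fin d → ℝ} :
    y ∈ polarDual S ↔ ∀ s ∈ S, y ⬝ᵥ s ≤ 1 := Iff.rfl

lemma latCast_injective : Function.Injective (latCast (d := d)) := by
  intro a b h
  funext i
  have : ((a i : ℝ)) = b i := congrFun h i
  exact_mod_cast this

@[simp] lemma latCast_zero : latCast (0 : Fin d → ℤ) = 0 := by
  funext i; simp [latCast]

lemma latCast_add (a b : Fin d → ℤ) : latCast (a + b) = latCast a + latCast b := by
  funext i; simp [latCast]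

lemma latCast_nsmul (n : ℕ) (a : Fin d → ℤ) : latCast (n • a) = (n : ℝ) • latCast a := by
  funext i; simp [latCast]

lemma latCast_single (j : Fin d) : latCast (Pi.single j (1 : ℤ)) = Pi.single j (1 : ℝ) := by
  funext i
  by_cases h : i = j
  · subst h; simp [latCast]
  · simp [latCast, Pi.single_apply, h]

lemma latCast_dot (a b : Fin d → ℤ) :
    latCast a ⬝ᵥ latCast b = ((∑ i, a i * b i : ℤ) : ℝ) := by
  simp [dotProduct, latCast]

/-- Lattice points in a bounded set form a finite set. -/
lemma finite_lattice_of_bounded {B : Set (Fin d → ℝ)} {R : ℝ}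
    (hB : ∀ b ∈ B, ‖b‖ ≤ R) : {x : Fin d → ℤ | latCast x ∈ B}.Finite := by
  have : {x : Fin d → ℤ | latCast x ∈ B} ⊆ {x : Fin d → ℤ | ∀ i, x i ∈ Set.Icc (-⌈R⌉) ⌈R⌉} := by
    intro x hx i
    have h1 : ‖latCast x‖ ≤ R := hB _ hx
    have h2 : |(x i : ℝ)| ≤ R := by
      have := norm_le_pi_norm (latCast x) i
      simpa [latCast, Real.norm_eq_abs] using this.trans h1
    rw [abs_le] at h2
    constructor
    · have : (-⌈R⌉ : ℝ) ≤ (x i : ℝ) := le_trans (by simpa using neg_le_neg (Int.le_ceil R)) h2.1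
      exact_mod_cast this
    · have : (x i : ℝ) ≤ (⌈R⌉ : ℝ) := h2.2.trans (Int.le_ceil R)
      exact_mod_cast this
  exact (Set.Finite.pi' fun i => Set.finite_Icc _ _).subset this

lemma abs_dot_le (x y : Fin d → ℝ) : |x ⬝ᵥ y| ≤ d * ‖x‖ * ‖y‖ := by
  calc |x ⬝ᵥ y| ≤ ∑ i, |x i * y i| := Finset.abs_sum_le_sum_abs _ _
    _ ≤ ∑ _i : Fin d, ‖x‖ * ‖y‖ := by
        refine Finset.sum_le_sum fun i _ => ?_
        rw [abs_mul]
        have hx : |x i| ≤ ‖x‖ := by simpa [Real.norm_eq_abs] using norm_le_pi_norm x i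
        have hy : |y i| ≤ ‖y‖ := by simpa [Real.norm_eq_abs] using norm_le_pi_norm y i
        exact mul_le_mul hx hy (abs_nonneg _) (norm_nonneg _)
    _ = d * ‖x‖ * ‖y‖ := by simp [Finset.sum_const, mul_assoc]

lemma dot_le (x y : Fin d → ℝ) : x ⬝ᵥ y ≤ d * ‖x‖ * ‖y‖ :=
  (le_abs_self _).trans (abs_dot_le x y)

lemma norm_sq_le_dot (x : Fin d → ℝ) : ‖x‖ ^ 2 ≤ x ⬝ᵥ x := by
  have hs : (0:ℝ) ≤ ∑ i, x i * x i :=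
    Finset.sum_nonneg fun i _ => mul_self_nonneg _
  have h1 : ‖x‖ ≤ Real.sqrt (∑ i, x i * x i) := by
    rw [pi_norm_le_iff_of_nonneg (Real.sqrt_nonneg _)]
    intro i
    rw [Real.norm_eq_abs, ← Real.sqrt_sq_eq_abs]
    refine Real.sqrt_le_sqrt ?_
    rw [sq]
    exact Finset.single_le_sum (f := fun j => x j * x j)
      (fun j _ => mul_self_nonneg _) (Finset.mem_univ i)
  calc ‖x‖ ^ 2 ≤ Real.sqrt (∑ i, x i * x i) ^ 2 := by
        exact pow_le_pow_left₀ (norm_nonneg _) h1 2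
    _ = ∑ i, x i * x i := Real.sq_sqrt hs
    _ = x ⬝ᵥ x := rfl

/-- Expansion of a continuous linear functional as a dot product. -/
lemma clm_eq_dot (g : (Fin d → ℝ) →L[ℝ] ℝ) (z : Fin d → ℝ) :
    g z = z ⬝ᵥ (fun i => g (fun j => if i = j then (1:ℝ) else 0)) := by
  conv_lhs => rw [pi_eq_sum_univ z]
  rw [map_sum]
  simp [dotProduct, smul_eq_mul]

lemma exists_int_of_forall_near {r : ℝ}
    (h : ∀ ε : ℝ, 0 < ε → ∃ z : ℤ, |r - z| ≤ ε) : ∃ z : ℤ, r = z := by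
  by_contra hc
  push_neg at hc
  have h1 : (⌊r⌋ : ℝ) < r := lt_of_le_of_ne (Int.floor_le r) (fun h => (hc ⌊r⌋ h.symm).elim)
  have h2 : r < ⌊r⌋ + 1 := Int.lt_floor_add_one r
  set c := min (r - ⌊r⌋) (⌊r⌋ + 1 - r) with hcdef
  have hcpos : 0 < c := lt_min (by linarith) (by linarith)
  obtain ⟨z, hz⟩ := h (c/2) (by linarith)
  rcases le_or_gt z ⌊r⌋ with hle | hlt
  · have : (z:ℝ) ≤ ⌊r⌋ := by exact_mod_cast hle
    have : c ≤ r - z := le_trans (min_le_left _ _) (by linarith)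
    have := abs_le.mp hz
    linarith
  · have : (⌊r⌋:ℝ) + 1 ≤ (z:ℝ) := by exact_mod_cast hlt
    have : c ≤ (z:ℝ) - r := le_trans (min_le_right _ _) (by linarith)
    have := abs_le.mp hz
    rw [abs_le] at hz
    linarith

end HibiAux

namespace HibiAux
section Core

open Set Matrix

variable {d : ℕ} {Q : Set (Fin d → ℝ)}

lemma polar_closed (Q : Set (Fin d → ℝ)) : IsClosed (polarDual Q) := by
  have : polarDual Q = ⋂ s ∈ Q, {y : Fin d → ℝ | y ⬝ᵥ s ≤ 1} := by
    ext y; simp [mem_polarDual]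
  rw [this]
  refine isClosed_biInter fun s _ => isClosed_le ?_ continuous_const
  exact continuous_finset_sum _ fun i _ => (continuous_apply i).mul continuous_const

lemma polar_convex (Q : Set (Fin d → ℝ)) : Convex ℝ (polarDual Q) := by
  intro y₁ h₁ y₂ h₂ a b ha hb hab
  intro s hs
  have e : (a • y₁ + b • y₂) ⬝ᵥ s = a * (y₁ ⬝ᵥ s) + b * (y₂ ⬝ᵥ s) := by
    simp [add_dotProduct, smul_dotProduct, smul_eq_mul]
  show (a • y₁ + b • y₂) ⬝ᵥ s ≤ 1
  rw [e]
  calc a * (y₁ ⬝ᵥ s) + b * (y₂ ⬝ᵥ s) ≤ a * 1 + b * 1 := by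
        gcongr
        · exact h₁ s hs
        · exact h₂ s hs
    _ = 1 := by rw [mul_one, mul_one, hab]

lemma zero_mem_polar (Q : Set (Fin d → ℝ)) : (0 : Fin d → ℝ) ∈ polarDual Q := by
  intro s _
  show (0 : Fin d → ℝ) ⬝ᵥ s ≤ 1
  simp

lemma polar_bounded {r : ℝ} (hr : 0 < r) (hball : Metric.ball (0 : Fin d → ℝ) r ⊆ Q) :
    ∀ y ∈ polarDual Q, ‖y‖ ≤ 2 / r := by
  intro y hy
  rw [pi_norm_le_iff_of_nonneg (by positivity)]
  intro i
  set c : ℝ := if y i < 0 then -(r/2) else r/2 with hc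
  have habs : |c| = r / 2 := by
    rcases lt_or_ge (y i) 0 with h | h
    · rw [hc, if_pos h, abs_neg, abs_of_pos (half_pos hr)]
    · rw [hc, if_neg (not_lt.mpr h), abs_of_pos (half_pos hr)]
  have hq : (Pi.single i c : Fin d → ℝ) ∈ Metric.ball (0 : Fin d → ℝ) r := by
    rw [Metric.mem_ball, dist_zero_right]
    have : ‖(Pi.single i c : Fin d → ℝ)‖ ≤ r/2 := by
      rw [pi_norm_le_iff_of_nonneg (le_of_lt (half_pos hr))]
      intro j
      rcases eq_or_ne j i with h | h
      · subst h; simp [Real.norm_eq_abs, habs]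
      · simp [Pi.single_apply, h, le_of_lt (half_pos hr)]
    linarith [half_lt_self hr]
  have h1 : y ⬝ᵥ (Pi.single i c : Fin d → ℝ) ≤ 1 := hy _ (hball hq)
  rw [dotProduct_single] at h1
  have h2 : (r/2) * |y i| ≤ 1 := by
    rcases lt_or_ge (y i) 0 with h | h
    · have he : y i * c = (r/2) * |y i| := by
        rw [hc, if_pos h, abs_of_neg h]; ring
      linarith [he ▸ h1]
    · have he : y i * c = (r/2) * |y i| := by
        rw [hc, if_neg (not_lt.mpr h), abs_of_nonneg h]; ring
      linarith [he ▸ h1]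
  have hy2 : |y i| * r ≤ 2 := by nlinarith
  rw [Real.norm_eq_abs, le_div_iff₀ hr]
  linarith

lemma polar_compact {r : ℝ} (hr : 0 < r) (hball : Metric.ball (0 : Fin d → ℝ) r ⊆ Q) :
    IsCompact (polarDual Q) := by
  refine (isCompact_closedBall (0 : Fin d → ℝ) (2/r)).of_isClosed_subset (polar_closed Q) ?_
  intro y hy
  rw [Metric.mem_closedBall, dist_zero_right]
  exact polar_bounded hr hball y hy

/-- The support function of the polar dual. -/
noncomputable def suppF (Q : Set (Fin d → ℝ)) (x : Fin d → ℝ) : ℝ :=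
  sSup ((fun y => x ⬝ᵥ y) '' polarDual Q)

section suppF

variable {r : ℝ} (hr : 0 < r) (hball : Metric.ball (0 : Fin d → ℝ) r ⊆ Q)
include hr hball

lemma suppF_bddAbove (x : Fin d → ℝ) : BddAbove ((fun y => x ⬝ᵥ y) '' polarDual Q) := by
  refine ⟨d * ‖x‖ * (2/r), ?_⟩
  rintro - ⟨y, hy, rfl⟩
  calc x ⬝ᵥ y ≤ d * ‖x‖ * ‖y‖ := dot_le x y
    _ ≤ d * ‖x‖ * (2/r) := by
        have := polar_bounded hr hball y hy
        exact mul_le_mul_of_nonneg_left this (by positivity)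

lemma suppF_ge (x : Fin d → ℝ) {y : Fin d → ℝ} (hy : y ∈ polarDual Q) :
    x ⬝ᵥ y ≤ suppF Q x :=
  le_csSup (suppF_bddAbove hr hball x) (Set.mem_image_of_mem _ hy)

lemma suppF_le {x : Fin d → ℝ} {c : ℝ} (h : ∀ y ∈ polarDual Q, x ⬝ᵥ y ≤ c) :
    suppF Q x ≤ c := by
  refine csSup_le ⟨(0 : ℝ), ⟨0, zero_mem_polar Q, by simp⟩⟩ ?_
  rintro - ⟨y, hy, rfl⟩
  exact h y hy



lemma suppF_attain (x : Fin d → ℝ) : ∃ y ∈ polarDual Q, suppF Q x = x ⬝ᵥ y := by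
  obtain ⟨y, hy, hval⟩ := (polar_compact hr hball).exists_sSup_image_eq
    ⟨0, zero_mem_polar Q⟩
    (Continuous.continuousOn (continuous_finset_sum _ fun i _ =>
      continuous_const.mul (continuous_apply i)))
  exact ⟨y, hy, hval⟩

lemma suppF_smul {t : ℝ} (ht : 0 ≤ t) (x : Fin d → ℝ) :
    suppF Q (t • x) = t * suppF Q x := by
  refine le_antisymm ?_ ?_
  · refine suppF_le hr hball fun y hy => ?_
    rw [smul_dotProduct, smul_eq_mul]
    exact mul_le_mul_of_nonneg_left (suppF_ge hr hball x hy) ht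
  · obtain ⟨y, hy, hval⟩ := suppF_attain hr hball x
    rw [hval, ← smul_eq_mul, ← smul_dotProduct]
    exact suppF_ge hr hball _ hy

lemma suppF_lipschitz (x x' : Fin d → ℝ) :
    suppF Q x' ≤ suppF Q x + d * (2/r) * ‖x' - x‖ := by
  refine suppF_le hr hball fun y hy => ?_
  have h1 : x' ⬝ᵥ y = x ⬝ᵥ y + (x' - x) ⬝ᵥ y := by
    rw [sub_dotProduct]; ring
  rw [h1]
  have h2 : (x' - x) ⬝ᵥ y ≤ d * ‖x' - x‖ * ‖y‖ := dot_le _ _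
  have h3 : ‖y‖ ≤ 2/r := polar_bounded hr hball y hy
  have h4 : x ⬝ᵥ y ≤ suppF Q x := suppF_ge hr hball x hy
  have h5 : d * ‖x' - x‖ * ‖y‖ ≤ d * ‖x' - x‖ * (2/r) :=
    mul_le_mul_of_nonneg_left h3 (by positivity)
  calc x ⬝ᵥ y + (x' - x) ⬝ᵥ y ≤ suppF Q x + d * ‖x' - x‖ * (2/r) := by linarith
    _ = suppF Q x + d * (2/r) * ‖x' - x‖ := by ring

end suppF

lemma suppF_nonneg {r : ℝ} (hr : 0 < r) (hball : Metric.ball (0 : Fin d → ℝ) r ⊆ Q)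
    (x : Fin d → ℝ) : 0 ≤ suppF Q x := by
  have := suppF_ge hr hball x (zero_mem_polar Q)
  simpa using this

lemma suppF_zero {r : ℝ} (hr : 0 < r) (hball : Metric.ball (0 : Fin d → ℝ) r ⊆ Q) :
    suppF Q 0 = 0 := by
  refine le_antisymm (suppF_le hr hball fun y _ => by simp) (suppF_nonneg hr hball 0)

end Core

end HibiAux

namespace HibiAux

open Set Matrix

variable {d : ℕ} {Q : Set (Fin d → ℝ)}

section Char

variable (hQc : IsCompact Q) (hQconv : Convex ℝ Q)
  {r : ℝ} (hr : 0 < r) (hball : Metric.ball (0 : Fin d → ℝ) r ⊆ Q)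

include hQc hQconv hr hball

/-- Bipolar / separation: a point dominated by the polar dual lies in `Q`. -/
lemma mem_of_dual_le {x : Fin d → ℝ} (hx : ∀ y ∈ polarDual Q, x ⬝ᵥ y ≤ 1) : x ∈ Q := by
  by_contra hxQ
  obtain ⟨g, u, hgu, hux⟩ := geometric_hahn_banach_closed_point hQconv hQc.isClosed hxQ
  have h0Q : (0 : Fin d → ℝ) ∈ Q := hball (by simp [hr])
  have hu : 0 < u := by have := hgu 0 h0Q; simpa using this
  set v : Fin d → ℝ := fun i => g (fun j => if i = j then (1:ℝ) else 0) with hv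
  set w : Fin d → ℝ := u⁻¹ • v with hw
  have hdot : ∀ z : Fin d → ℝ, z ⬝ᵥ w = u⁻¹ * g z := by
    intro z
    rw [hw, dotProduct_smul, smul_eq_mul, ← clm_eq_dot]
  have hwK : w ∈ polarDual Q := by
    intro s hs
    show w ⬝ᵥ s ≤ 1
    rw [dotProduct_comm, hdot s]
    rw [inv_mul_le_iff₀ hu, mul_one]
    exact le_of_lt (hgu s hs)
  have := hx w hwK
  rw [hdot x] at this
  have : g x ≤ u := by
    rw [inv_mul_le_iff₀ hu, mul_one] at this
    exact this
  linarith

lemma mem_smul_iff_suppF {n : ℝ} (hn : 0 < n) {x : Fin d → ℝ} :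
    x ∈ n • Q ↔ suppF Q x ≤ n := by
  constructor
  · rintro ⟨q, hq, rfl⟩
    have hq1 : suppF Q q ≤ 1 := by
      refine suppF_le hr hball fun y hy => ?_
      rw [dotProduct_comm]
      exact hy q hq
    rw [suppF_smul hr hball (le_of_lt hn)]
    calc n * suppF Q q ≤ n * 1 := mul_le_mul_of_nonneg_left hq1 (le_of_lt hn)
      _ = n := mul_one n
  · intro h
    have hx' : n⁻¹ • x ∈ Q := by
      refine mem_of_dual_le hQc hQconv hr hball fun y hy => ?_
      rw [smul_dotProduct, smul_eq_mul]
      have := suppF_ge hr hball x hy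
      rw [inv_mul_le_iff₀ hn, mul_one]
      linarith
    have : n • (n⁻¹ • x) ∈ n • Q := Set.smul_mem_smul_set hx'
    rwa [smul_inv_smul₀ (ne_of_gt hn)] at this

lemma mem_interior_smul_iff_suppF {c : ℝ} (hc : 0 < c) {x : Fin d → ℝ} :
    x ∈ interior (c • Q) ↔ suppF Q x < c := by
  constructor
  · intro hx
    obtain ⟨ε, hε, hballx⟩ := Metric.mem_nhds_iff.mp (mem_interior_iff_mem_nhds.mp hx)
    rcases eq_or_ne x 0 with rfl | hx0
    · rw [suppF_zero hr hball]; exact hc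
    · have hnx : 0 < ‖x‖ := norm_pos_iff.mpr hx0
      set t : ℝ := 1 + ε / (2 * ‖x‖) with ht
      have ht1 : 1 < t := by
        have : 0 < ε / (2 * ‖x‖) := by positivity
        rw [ht]; linarith
      have htx : t • x ∈ Metric.ball x ε := by
        rw [Metric.mem_ball, dist_eq_norm]
        have : t • x - x = (t - 1) • x := by
          rw [sub_smul, one_smul]
        rw [this, norm_smul, Real.norm_eq_abs, abs_of_pos (by linarith)]
        rw [ht]
        have : (1 + ε / (2 * ‖x‖) - 1) * ‖x‖ = ε / 2 := by
          field_simp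
          ring
        rw [this]
        linarith
      have hmem : t • x ∈ c • Q := hballx htx
      have h1 : suppF Q (t • x) ≤ c := (mem_smul_iff_suppF hQc hQconv hr hball hc).mp hmem
      rw [suppF_smul hr hball (by linarith)] at h1
      rcases le_or_gt (suppF Q x) 0 with h | h
      · linarith
      · nlinarith
  · intro hx
    have hopen : IsOpen {z : Fin d → ℝ | suppF Q z < c} := by
      rw [Metric.isOpen_iff]
      intro z hz
      refine ⟨(c - suppF Q z) / (d * (2/r) + 1), by
        have : (0:ℝ) < d * (2/r) + 1 := by positivity
        exact div_pos (by simpa using hz) this, ?_⟩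
      intro z' hz'
      rw [Metric.mem_ball, dist_eq_norm] at hz'
      have h1 := suppF_lipschitz hr hball z z'
      have h2 : (d:ℝ) * (2/r) * ‖z' - z‖ ≤ (d * (2/r) + 1) * ‖z' - z‖ := by
        have : (0:ℝ) ≤ ‖z' - z‖ := norm_nonneg _
        nlinarith
      have h3 : (d * (2/r) + 1) * ‖z' - z‖ < (d * (2/r) + 1) * ((c - suppF Q z) / (d * (2/r) + 1)) := by
        have : (0:ℝ) < d * (2/r) + 1 := by positivity
        exact mul_lt_mul_of_pos_left hz' this
      have h4 : (d * (2/r) + 1) * ((c - suppF Q z) / (d * (2/r) + 1)) = c - suppF Q z := by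
        have hpos : (0:ℝ) < d * (2/r) + 1 := by positivity
        field_simp
      show suppF Q z' < c
      rw [h4] at h3
      linarith
    have hsub : {z : Fin d → ℝ | suppF Q z < c} ⊆ c • Q := fun z hz =>
      (mem_smul_iff_suppF hQc hQconv hr hball hc).mpr (le_of_lt hz)
    exact interior_maximal hsub hopen hx

end Char

/-- Coercivity of the support function. -/
lemma norm_le_suppF {R : ℝ} (hR : 0 < R) (hQR : ∀ q ∈ Q, ‖q‖ ≤ R)
    {r : ℝ} (hr : 0 < r) (hball : Metric.ball (0 : Fin d → ℝ) r ⊆ Q)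
    (x : Fin d → ℝ) : ‖x‖ ≤ ((d+1) * R) * suppF Q x := by
  rcases eq_or_ne x 0 with rfl | hx0
  · rw [suppF_zero hr hball]; simp
  · have hnx : 0 < ‖x‖ := norm_pos_iff.mpr hx0
    set a : ℝ := 1 / ((d+1) * R * ‖x‖) with ha
    have hapos : 0 < a := by rw [ha]; positivity
    have hy₀ : a • x ∈ polarDual Q := by
      intro s hs
      show (a • x) ⬝ᵥ s ≤ 1
      rw [smul_dotProduct, smul_eq_mul]
      have h1 : x ⬝ᵥ s ≤ d * ‖x‖ * R := by
        calc x ⬝ᵥ s ≤ d * ‖x‖ * ‖s‖ := dot_le x s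
          _ ≤ d * ‖x‖ * R := by
              exact mul_le_mul_of_nonneg_left (hQR s hs) (by positivity)
      calc a * (x ⬝ᵥ s) ≤ a * (d * ‖x‖ * R) := by
            rcases le_or_gt (x ⬝ᵥ s) (d * ‖x‖ * R) with h | h
            · exact mul_le_mul_of_nonneg_left h (le_of_lt hapos)
            · linarith
        _ = (d * ‖x‖ * R) / ((d+1) * R * ‖x‖) := by rw [ha]; ring
        _ = d / (d+1) := by
            field_simp
        _ ≤ 1 := by
            rw [div_le_one (by positivity)]
            linarith
    have h2 : x ⬝ᵥ (a • x) ≤ suppF Q x := suppF_ge hr hball x hy₀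
    have h3 : x ⬝ᵥ (a • x) = a * (x ⬝ᵥ x) := by
      rw [dotProduct_smul, smul_eq_mul]
    have h4 : ‖x‖^2 ≤ x ⬝ᵥ x := norm_sq_le_dot x
    have h5 : a * ‖x‖^2 ≤ suppF Q x := by
      rw [h3] at h2
      calc a * ‖x‖^2 ≤ a * (x ⬝ᵥ x) := mul_le_mul_of_nonneg_left h4 (le_of_lt hapos)
        _ ≤ suppF Q x := h2
    have h6 : a * ‖x‖^2 = ‖x‖ / ((d+1) * R) := by
      rw [ha]; field_simp
    rw [h6] at h5
    rw [div_le_iff₀ (by positivity)] at h5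
    calc ‖x‖ ≤ suppF Q x * ((d+1) * R) := h5
      _ = ((d+1) * R) * suppF Q x := by ring

end HibiAux

namespace HibiAux

open Set Matrix

variable {d : ℕ} {Q : Set (Fin d → ℝ)}

lemma smul_image_sub (c : ℝ) (a : Fin d → ℝ) (A : Set (Fin d → ℝ)) :
    c • ((fun x => x - a) '' A) = (fun x => x - c • a) '' (c • A) := by
  ext z
  constructor
  · rintro ⟨-, ⟨y, hy, rfl⟩, rfl⟩
    exact ⟨c • y, Set.smul_mem_smul_set hy, by simp [smul_sub]⟩
  · rintro ⟨-, ⟨y, hy, rfl⟩, rfl⟩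
    exact ⟨y - a, ⟨y, hy, rfl⟩, by simp [smul_sub]⟩

lemma interior_image_sub (a : Fin d → ℝ) (A : Set (Fin d → ℝ)) :
    interior ((fun x => x - a) '' A) = (fun x => x - a) '' interior A := by
  have h := (Homeomorph.subRight a).image_interior A
  simpa using h.symm

lemma lattice_ncard_sub (w : Fin d → ℤ) (A : Set (Fin d → ℝ)) :
    Set.ncard {x : Fin d → ℤ | latCast x ∈ (fun z => z - latCast w) '' A} =
      Set.ncard {x : Fin d → ℤ | latCast x ∈ A} := by
  have hset : {x : Fin d → ℤ | latCast x ∈ (fun z => z - latCast w) '' A} =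
      (fun x => x - w) '' {x : Fin d → ℤ | latCast x ∈ A} := by
    ext x
    simp only [Set.mem_setOf_eq, Set.mem_image]
    constructor
    · rintro ⟨a, ha, hax⟩
      refine ⟨x + w, ?_, by abel⟩
      have he : latCast (x + w) = a := by
        rw [latCast_add, ← hax]; abel
      rw [he]; exact ha
    · rintro ⟨u, hu, rfl⟩
      refine ⟨latCast u, hu, ?_⟩
      show latCast u - latCast w = latCast (u - w)
      funext i; simp [latCast]
  rw [hset, Set.ncard_image_of_injective]
  intro x y h
  simpa using congrArg (· + w) h

section LatticeChar

variable (hQc : IsCompact Q) (hQconv : Convex ℝ Q)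
  {r R : ℝ} (hr : 0 < r) (hball : Metric.ball (0 : Fin d → ℝ) r ⊆ Q)
  (hR : 0 < R) (hQR : ∀ q ∈ Q, ‖q‖ ≤ R)

include hQc hQconv hr hball hR hQR

lemma lattice_smul_char (n : ℕ) :
    {x : Fin d → ℤ | latCast x ∈ (n : ℝ) • Q} =
      {x : Fin d → ℤ | suppF Q (latCast x) ≤ (n : ℝ)} := by
  rcases Nat.eq_zero_or_pos n with rfl | hn
  · ext x
    simp only [Set.mem_setOf_eq, Nat.cast_zero]
    rw [Set.zero_smul_set ⟨0, hball (by simp [hr])⟩]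
    constructor
    · intro hx
      have hx0 : latCast x = 0 := by simpa using hx
      rw [hx0, suppF_zero hr hball]
    · intro hx
      have : latCast x = 0 := by
        by_contra h
        have h1 := norm_le_suppF hR hQR hr hball (latCast x)
        have h2 : 0 < ‖latCast x‖ := norm_pos_iff.mpr h
        have h3 : (0:ℝ) ≤ (d+1) * R := by positivity
        nlinarith [mul_nonneg h3 (neg_nonneg.mpr hx)]
      simpa using this
  · ext x
    exact mem_smul_iff_suppF hQc hQconv hr hball (by exact_mod_cast hn)

lemma lattice_interior_char (n : ℕ) :
    {x : Fin d → ℤ | latCast x ∈ interior (((n : ℝ) + 1) • Q)} =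
      {x : Fin d → ℤ | suppF Q (latCast x) < (n : ℝ) + 1} := by
  ext x
  exact mem_interior_smul_iff_suppF hQc hQconv hr hball (by positivity)

omit hQc hQconv in
lemma lattice_suppF_lt_finite (c : ℝ) :
    {x : Fin d → ℤ | suppF Q (latCast x) < c}.Finite := by
  have : {x : Fin d → ℤ | suppF Q (latCast x) < c} ⊆
      {x : Fin d → ℤ | latCast x ∈ {z : Fin d → ℝ | suppF Q z < c}} := fun x hx => hx
  refine Set.Finite.subset (finite_lattice_of_bounded (B := {z : Fin d → ℝ | suppF Q z < c})
    (R := (d+1) * R * c) ?_) this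
  intro b hb
  have h1 := norm_le_suppF hR hQR hr hball b
  have h2 : suppF Q b < c := hb
  have h3 : (0:ℝ) ≤ (d+1) * R := by positivity
  calc ‖b‖ ≤ ((d+1) * R) * suppF Q b := h1
    _ ≤ ((d+1) * R) * c := mul_le_mul_of_nonneg_left (le_of_lt h2) h3
    _ = (d+1) * R * c := by ring

end LatticeChar

end HibiAux

namespace HibiAux

open Set Matrix

variable {d : ℕ}

lemma image_sub_compact {P : Set (Fin d → ℝ)} (hP : IsCompact P) (a : Fin d → ℝ) :
    IsCompact ((fun x => x - a) '' P) :=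
  hP.image (continuous_id.sub continuous_const)

lemma image_sub_convex {P : Set (Fin d → ℝ)} (hP : Convex ℝ P) (a : Fin d → ℝ) :
    Convex ℝ ((fun x => x - a) '' P) := by
  have h := hP.translate (-a)
  have he : (fun x => x - a) = (fun x => -a + x) := by
    funext x; rw [sub_eq_neg_add]
  rw [he]
  exact h

lemma count_smul_transfer (p : Fin d → ℤ) (A : Set (Fin d → ℝ)) (n : ℕ) :
    Set.ncard {x : Fin d → ℤ | latCast x ∈ (n : ℝ) • ((fun z => z - latCast p) '' A)} =
      Set.ncard {x : Fin d → ℤ | latCast x ∈ (n : ℝ) • A} := by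
  rw [smul_image_sub]
  have h : (n : ℝ) • latCast p = latCast (n • p) := (latCast_nsmul n p).symm
  rw [h, lattice_ncard_sub]

lemma count_interior_transfer (p : Fin d → ℤ) (A : Set (Fin d → ℝ)) (n : ℕ) :
    Set.ncard {x : Fin d → ℤ |
        latCast x ∈ interior (((n : ℝ) + 1) • ((fun z => z - latCast p) '' A))} =
      Set.ncard {x : Fin d → ℤ | latCast x ∈ interior (((n : ℝ) + 1) • A)} := by
  rw [smul_image_sub, interior_image_sub]
  have h : ((n : ℝ) + 1) • latCast p = latCast ((n + 1) • p) := by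
    rw [latCast_nsmul]
    push_cast
    ring_nf
  rw [h, lattice_ncard_sub]

/-- If the polar dual of `Q` is bounded and `Q` has nonempty interior,
then `0` is in the interior of `Q`. -/
lemma zero_mem_interior_of_polar_bounded {Q : Set (Fin d → ℝ)}
    (hQc : IsCompact Q) (hQconv : Convex ℝ Q) (hint : (interior Q).Nonempty)
    {C : ℝ} (hC : ∀ y ∈ polarDual Q, ‖y‖ ≤ C) : 0 ∈ interior Q := by
  by_contra h0
  obtain ⟨g, hg⟩ := geometric_hahn_banach_open_point hQconv.interior isOpen_interior h0
  rw [map_zero] at hg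
  obtain ⟨a, ha⟩ := hint
  have hga : g a < 0 := hg a ha
  set v : Fin d → ℝ := fun i => g (fun j => if i = j then (1:ℝ) else 0) with hv
  have hv0 : v ≠ 0 := by
    intro hveq
    have := clm_eq_dot g a
    rw [hv] at hveq
    rw [hveq] at this
    rw [dotProduct_zero] at this
    linarith
  have hq : ∀ q ∈ Q, g q ≤ 0 := by
    intro q hq
    by_contra hgq
    push_neg at hgq
    set θ : ℝ := g q / (2 * (g q + |g a|)) with hθ
    have hden : 0 < g q + |g a| := by positivity
    have hθpos : 0 < θ := by rw [hθ]; positivity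
    have hθlt : θ < 1 := by
      rw [hθ, div_lt_one (by positivity)]
      nlinarith [abs_nonneg (g a)]
    have hcombo : (1 - θ) • q + θ • a ∈ interior Q :=
      hQconv.combo_closure_interior_mem_interior (subset_closure hq) ha
        (by linarith) hθpos (by ring)
    have := hg _ hcombo
    rw [map_add, _root_.map_smul, _root_.map_smul, smul_eq_mul, smul_eq_mul] at this
    have hga' : g a ≥ -|g a| := neg_abs_le _
    have hθb : θ * (g q + |g a|) = g q / 2 := by
      rw [hθ]; field_simp
    nlinarith
  have hC0 : 0 ≤ C := le_trans (norm_nonneg _) (hC 0 (zero_mem_polar Q))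
  have hnv : 0 < ‖v‖ := norm_pos_iff.mpr hv0
  set t : ℝ := (C + 1) / ‖v‖ with ht
  have htpos : 0 < t := by rw [ht]; positivity
  have htv : t • v ∈ polarDual Q := by
    intro s hs
    show (t • v) ⬝ᵥ s ≤ 1
    rw [smul_dotProduct, smul_eq_mul]
    have h1 : v ⬝ᵥ s ≤ 0 := by
      rw [dotProduct_comm, ← clm_eq_dot]
      exact hq s hs
    nlinarith
  have := hC _ htv
  rw [norm_smul, Real.norm_eq_abs, abs_of_pos htpos, ht] at this
  rw [div_mul_cancel₀ _ (ne_of_gt hnv)] at this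
  linarith

end HibiAux

namespace HibiAux

open Set Matrix

variable {d : ℕ}

lemma dot_linear (x : Fin d → ℝ) : IsLinearMap ℝ (fun z : Fin d → ℝ => x ⬝ᵥ z) := by
  constructor
  · intro a b; rw [dotProduct_add]
  · intro c a; rw [dotProduct_smul]

/-- Forward direction of Hibi's theorem. -/
lemma forward_direction (P S : Set (Fin d → ℝ)) (hSfin : S.Finite)
    (hP : P = convexHull ℝ S) (hfull : (interior P).Nonempty)
    (p : Fin d → ℤ) (W : Finset (Fin d → ℤ))
    (hpol : polarDual ((fun x => x - latCast p) '' P) = convexHull ℝ (latCast '' ↑W)) :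
    ∀ n : ℕ, Set.ncard {x : Fin d → ℤ | latCast x ∈ (n : ℝ) • P} =
      Set.ncard {x : Fin d → ℤ | latCast x ∈ interior (((n : ℝ) + 1) • P)} := by
  have hPc : IsCompact P := hP ▸ hSfin.isCompact_convexHull (𝕜 := ℝ)
  have hPconv : Convex ℝ P := hP ▸ convex_convexHull ℝ S
  set a : Fin d → ℝ := latCast p with hadef
  set Q : Set (Fin d → ℝ) := (fun x => x - a) '' P with hQdef
  have hQc : IsCompact Q := image_sub_compact hPc a
  have hQconv : Convex ℝ Q := image_sub_convex hPconv a
  have hintQ : (interior Q).Nonempty := by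
    rw [hQdef, interior_image_sub]
    exact hfull.image _
  -- the polar dual is compact
  have hKcomp : IsCompact (polarDual Q) := by
    rw [hQdef, hpol]
    exact ((W.finite_toSet).image latCast).isCompact_convexHull (𝕜 := ℝ)
  obtain ⟨C, hCsub⟩ := hKcomp.isBounded.subset_closedBall 0
  have hC : ∀ y ∈ polarDual Q, ‖y‖ ≤ C := by
    intro y hy
    have := hCsub hy
    rwa [Metric.mem_closedBall, dist_zero_right] at this
  have h0Q : 0 ∈ interior Q := zero_mem_interior_of_polar_bounded hQc hQconv hintQ hC
  obtain ⟨r, hr, hball⟩ := Metric.mem_nhds_iff.mp (mem_interior_iff_mem_nhds.mp h0Q)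
  obtain ⟨R₀, hRsub⟩ := hQc.isBounded.subset_closedBall 0
  set R : ℝ := max R₀ 1 with hRdef
  have hR : 0 < R := lt_of_lt_of_le one_pos (le_max_right _ _)
  have hQR : ∀ q ∈ Q, ‖q‖ ≤ R := by
    intro q hq
    have := hRsub hq
    rw [Metric.mem_closedBall, dist_zero_right] at this
    exact this.trans (le_max_left _ _)
  -- W is nonempty
  have hWne : W.Nonempty := by
    by_contra hW
    rw [Finset.not_nonempty_iff_eq_empty] at hW
    have h0 : (0 : Fin d → ℝ) ∈ polarDual Q := zero_mem_polar Q
    rw [hQdef, hpol, hW] at h0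
    simp at h0
  -- the support function takes integer values on the lattice
  have hfint : ∀ x : Fin d → ℤ, ∃ m : ℤ, suppF Q (latCast x) = m := by
    intro x
    set N : Finset ℤ := W.image (fun w => ∑ i, x i * w i) with hN
    have hNne : N.Nonempty := hWne.image _
    refine ⟨N.max' hNne, le_antisymm ?_ ?_⟩
    · refine suppF_le hr hball fun y hy => ?_
      rw [hQdef, hpol] at hy
      have hhull : convexHull ℝ (latCast '' ↑W) ⊆
          {z : Fin d → ℝ | latCast x ⬝ᵥ z ≤ (N.max' hNne : ℝ)} := by
        refine convexHull_min ?_ (convex_halfSpace_le (dot_linear (latCast x)) _)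
        rintro - ⟨w, hw, rfl⟩
        show latCast x ⬝ᵥ latCast w ≤ (N.max' hNne : ℝ)
        rw [latCast_dot]
        have : (∑ i, x i * w i) ≤ N.max' hNne :=
          N.le_max' _ (Finset.mem_image_of_mem _ hw)
        exact_mod_cast this
      exact hhull hy
    · obtain ⟨w₀, hw₀, hw₀eq⟩ := Finset.mem_image.mp (N.max'_mem hNne)
      have hmem : latCast w₀ ∈ polarDual Q := by
        rw [hQdef, hpol]
        exact subset_convexHull ℝ _ (Set.mem_image_of_mem _ hw₀)
      have := suppF_ge hr hball (latCast x) hmem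
      rw [latCast_dot] at this
      rw [← hw₀eq]
      exact_mod_cast this
  -- conclude
  intro n
  rw [← count_smul_transfer p P n, ← count_interior_transfer p P n]
  rw [show (fun z => z - latCast p) '' P = Q from rfl]
  rw [lattice_smul_char hQc hQconv hr hball hR hQR n,
    lattice_interior_char hQc hQconv hr hball hR hQR n]
  congr 1
  ext x
  obtain ⟨m, hm⟩ := hfint x
  simp only [Set.mem_setOf_eq, hm]
  constructor
  · intro h
    have : m ≤ (n : ℤ) := by exact_mod_cast h
    have : m < (n : ℤ) + 1 := by omega
    exact_mod_cast this
  · intro h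
    have : m < (n : ℤ) + 1 := by exact_mod_cast h
    have : m ≤ (n : ℤ) := by omega
    exact_mod_cast this

end HibiAux

namespace HibiAux

open Set Matrix

variable {d : ℕ}

lemma sum_dot {A : Type*} (F : Finset A) (f : A → Fin d → ℝ) (y : Fin d → ℝ) :
    (∑ s ∈ F, f s) ⬝ᵥ y = ∑ s ∈ F, f s ⬝ᵥ y := by
  simp only [dotProduct, Finset.sum_apply, Finset.sum_mul]
  rw [Finset.sum_comm]

lemma rat_mul_den_dvd (q : ℚ) {N : ℕ} (h : q.den ∣ N) : ∃ z : ℤ, (q * N : ℚ) = z := by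
  obtain ⟨m, hm⟩ := h
  refine ⟨q.num * m, ?_⟩
  have hden : (q.den : ℚ) ≠ 0 := by
    exact_mod_cast q.den_ne_zero
  have h1 : (q * q.den : ℚ) = q.num :=
    ((div_eq_iff hden).mp (Rat.num_div_den q)).symm
  rw [hm]
  push_cast
  calc q * ((q.den : ℚ) * (m : ℚ)) = (q * q.den) * m := by ring
    _ = (q.num : ℚ) * m := by rw [h1]
    _ = ((q.num : ℚ)) * (m : ℚ) := rfl

/-- A vector with rational coordinates has an integral positive multiple. -/
lemma exists_int_multiple {x₀ : Fin d → ℝ} (hx : ∀ i, ∃ q : ℚ, x₀ i = q) :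
    ∃ (N : ℕ) (u : Fin d → ℤ), 0 < N ∧ latCast u = (N : ℝ) • x₀ := by
  classical
  set q : Fin d → ℚ := fun i => (hx i).choose with hq
  have hqs : ∀ i, x₀ i = q i := fun i => (hx i).choose_spec
  set N : ℕ := ∏ i, (q i).den with hN
  have hNpos : 0 < N := Finset.prod_pos fun i _ => (q i).pos
  have hdvd : ∀ i, (q i).den ∣ N := fun i =>
    Finset.dvd_prod_of_mem (fun i => (q i).den) (Finset.mem_univ i)
  have hz : ∀ i, ∃ z : ℤ, (q i * N : ℚ) = z := fun i => rat_mul_den_dvd (q i) (hdvd i)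
  refine ⟨N, fun i => (hz i).choose, hNpos, ?_⟩
  funext i
  have h1 : (q i * N : ℚ) = (hz i).choose := (hz i).choose_spec
  have h2 : ((q i : ℝ)) * N = ((hz i).choose : ℝ) := by
    exact_mod_cast congrArg (fun t : ℚ => (t : ℝ)) h1
  show ((hz i).choose : ℝ) = (N : ℝ) • x₀ i
  rw [hqs i, smul_eq_mul]
  rw [← h2]
  ring

lemma rat_sum_finset {A : Type*} (F : Finset A) (f : A → ℝ)
    (hf : ∀ s ∈ F, ∃ q : ℚ, f s = q) : ∃ q : ℚ, ∑ s ∈ F, f s = q := by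
  classical
  induction F using Finset.induction_on with
  | empty => exact ⟨0, by simp⟩
  | insert _ _ hnotmem ih =>
    rename_i a F'
    obtain ⟨qa, hqa⟩ := hf a (Finset.mem_insert_self a F')
    obtain ⟨qs, hqs⟩ := ih fun s hs => hf s (Finset.mem_insert_of_mem hs)
    refine ⟨qa + qs, ?_⟩
    rw [Finset.sum_insert hnotmem, hqa, hqs]
    push_cast
    ring

lemma polar_convexHull (S₁ : Set (Fin d → ℝ)) :
    polarDual (convexHull ℝ S₁) = polarDual S₁ := by
  apply Set.Subset.antisymm
  · intro y hy s hs
    exact hy s (subset_convexHull ℝ S₁ hs)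
  · intro y hy s hs
    have hsub : convexHull ℝ S₁ ⊆ {z : Fin d → ℝ | y ⬝ᵥ z ≤ 1} := by
      refine convexHull_min ?_ (convex_halfSpace_le ?_ _)
      · intro z hz
        exact hy z hz
      · constructor
        · intro a b; rw [dotProduct_add]
        · intro c a; rw [dotProduct_smul]
    exact hsub hs

end HibiAux

namespace HibiAux

open Set Matrix

variable {d : ℕ}

lemma extreme_integral
    {Q S₁ : Set (Fin d → ℝ)} (hS₁fin : S₁.Finite)
    (hS₁rat : ∀ s ∈ S₁, ∀ i, ∃ q : ℚ, s i = q)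
    (hpolar : polarDual Q = polarDual S₁)
    {r : ℝ} (hr : 0 < r) (hball : Metric.ball (0 : Fin d → ℝ) r ⊆ Q)
    (hfint : ∀ x : Fin d → ℤ, ∃ m : ℤ, suppF Q (latCast x) = m)
    {v : Fin d → ℝ} (hv : v ∈ Set.extremePoints ℝ (polarDual Q)) :
    ∃ xv : Fin d → ℤ, latCast xv = v := by
  classical
  obtain ⟨hvK, hvext⟩ := mem_extremePoints.mp hv
  have hvS : ∀ s ∈ S₁, v ⬝ᵥ s ≤ 1 := by rw [hpolar] at hvK; exact hvK
  have hvK' : v ∈ polarDual Q := (mem_extremePoints.mp hv).1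
  set T : Set (Fin d → ℝ) := {s ∈ S₁ | v ⬝ᵥ s = 1} with hT
  have hTfin : T.Finite := hS₁fin.subset (Set.sep_subset _ _)
  set Tf := hTfin.toFinset with hTf
  -- Step 1 : the tight constraints span
  have hperp : ∀ w : Fin d → ℝ, (∀ s ∈ T, w ⬝ᵥ s = 0) → w = 0 := by
    intro w hw
    by_contra hw0
    set D := hS₁fin.toFinset.filter (fun s => ¬ (v ⬝ᵥ s = 1)) with hD
    set G := insert (1:ℝ) (D.image (fun s => (1 - v ⬝ᵥ s) / (1 + |w ⬝ᵥ s|))) with hG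
    have hGne : G.Nonempty := ⟨1, Finset.mem_insert_self _ _⟩
    set ε := G.min' hGne with hε
    have hεpos : 0 < ε := by
      have hmem : ε ∈ G := G.min'_mem hGne
      rw [hG] at hmem
      rcases Finset.mem_insert.mp hmem with h | h
      · rw [h]; norm_num
      · obtain ⟨s, hsD, hseq⟩ := Finset.mem_image.mp h
        rw [hD, Finset.mem_filter] at hsD
        have hs₁ : s ∈ S₁ := hS₁fin.mem_toFinset.mp hsD.1
        have hlt : v ⬝ᵥ s < 1 := lt_of_le_of_ne (hvS s hs₁) hsD.2
        rw [← hseq]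
        have h6 : 0 < 1 - v ⬝ᵥ s := by linarith
        positivity
    have hεle : ∀ s, s ∈ S₁ → v ⬝ᵥ s ≠ 1 → ε * (1 + |w ⬝ᵥ s|) ≤ 1 - v ⬝ᵥ s := by
      intro s hs hne
      have hsD : s ∈ D := by
        rw [hD, Finset.mem_filter]
        exact ⟨hS₁fin.mem_toFinset.mpr hs, hne⟩
      have hle : ε ≤ (1 - v ⬝ᵥ s) / (1 + |w ⬝ᵥ s|) :=
        G.min'_le _ (Finset.mem_insert_of_mem (Finset.mem_image_of_mem _ hsD))
      rwa [le_div_iff₀ (by positivity)] at hle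
    have hmemK : ∀ (c : ℝ), |c| ≤ ε → v + c • w ∈ polarDual Q := by
      intro c hc
      rw [hpolar]
      intro s hs
      show (v + c • w) ⬝ᵥ s ≤ 1
      rw [add_dotProduct, smul_dotProduct, smul_eq_mul]
      by_cases h1 : v ⬝ᵥ s = 1
      · rw [hw s ⟨hs, h1⟩, mul_zero, add_zero, h1]
      · have h2 := hεle s hs h1
        have h3 : c * (w ⬝ᵥ s) ≤ |c| * |w ⬝ᵥ s| := by
          calc c * (w ⬝ᵥ s) ≤ |c * (w ⬝ᵥ s)| := le_abs_self _
            _ = |c| * |w ⬝ᵥ s| := abs_mul _ _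
        have h4 : |c| * |w ⬝ᵥ s| ≤ ε * |w ⬝ᵥ s| :=
          mul_le_mul_of_nonneg_right hc (abs_nonneg _)
        nlinarith [abs_nonneg (w ⬝ᵥ s)]
    have hy₁ : v + ε • w ∈ polarDual Q := hmemK ε (by rw [abs_of_pos hεpos])
    have hy₂ : v + (-ε) • w ∈ polarDual Q := hmemK (-ε) (by rw [abs_neg, abs_of_pos hεpos])
    have hseg : v ∈ openSegment ℝ (v + ε • w) (v + (-ε) • w) := by
      refine ⟨1/2, 1/2, by norm_num, by norm_num, by norm_num, ?_⟩
      module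
    have heq := (hvext _ hy₁ _ hy₂ hseg).1
    rw [add_eq_left] at heq
    rcases smul_eq_zero.mp heq with h | h
    · exact absurd h (ne_of_gt hεpos)
    · exact hw0 h
  -- Step 2 : uniqueness of the tight point
  have huniq : ∀ y ∈ polarDual Q, (∀ s ∈ T, y ⬝ᵥ s = 1) → y = v := by
    intro y hy hys
    have h0 : y - v = 0 := hperp _ (fun s hs => by
      rw [sub_dotProduct, hys s hs, hs.2]; ring)
    exact sub_eq_zero.mp h0
  -- The exposing direction
  set x₀ : Fin d → ℝ := ∑ s ∈ Tf, s with hx₀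
  have hx₀dot : ∀ y, x₀ ⬝ᵥ y = ∑ s ∈ Tf, s ⬝ᵥ y := fun y => sum_dot Tf (fun s => s) y
  have hterm : ∀ y, y ∈ polarDual Q → ∀ s ∈ Tf, s ⬝ᵥ y ≤ s ⬝ᵥ v := by
    intro y hy s hs
    have hsT : s ∈ T := hTfin.mem_toFinset.mp hs
    rw [dotProduct_comm s v, hsT.2, dotProduct_comm s y]
    rw [hpolar] at hy
    exact hy s hsT.1
  have hmax : ∀ y ∈ polarDual Q, x₀ ⬝ᵥ y ≤ x₀ ⬝ᵥ v := by
    intro y hy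
    rw [hx₀dot, hx₀dot]
    exact Finset.sum_le_sum (hterm y hy)
  have huniq2 : ∀ y ∈ polarDual Q, x₀ ⬝ᵥ y = x₀ ⬝ᵥ v → y = v := by
    intro y hy heq
    refine huniq y hy fun s hs => ?_
    rw [hx₀dot, hx₀dot] at heq
    have hall := (Finset.sum_eq_sum_iff_of_le (hterm y hy)).mp heq
    have hsT : s ∈ T := hs
    have hsf : s ∈ Tf := hTfin.mem_toFinset.mpr hs
    have h1 : s ⬝ᵥ y = s ⬝ᵥ v := hall s hsf
    rw [dotProduct_comm y s, h1, dotProduct_comm s v, hsT.2]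
  -- Integral multiple of the exposing direction
  have hx₀rat : ∀ i, ∃ q : ℚ, x₀ i = q := by
    intro i
    have he : x₀ i = ∑ s ∈ Tf, s i := by
      rw [hx₀]; exact Finset.sum_apply i Tf (fun s => s)
    rw [he]
    exact rat_sum_finset Tf (fun s => s i) fun s hs =>
      hS₁rat s (hTfin.mem_toFinset.mp hs).1 i
  obtain ⟨N, u, hNpos, hu⟩ := exists_int_multiple hx₀rat
  set u' := latCast u with hu'
  have hu'dot : ∀ y, u' ⬝ᵥ y = N * (x₀ ⬝ᵥ y) := by
    intro y
    rw [show u' = (N:ℝ) • x₀ from hu, smul_dotProduct, smul_eq_mul]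
  have hNR : (0:ℝ) < N := by exact_mod_cast hNpos
  have hu'max : ∀ y ∈ polarDual Q, u' ⬝ᵥ y ≤ u' ⬝ᵥ v := fun y hy => by
    rw [hu'dot, hu'dot]; exact mul_le_mul_of_nonneg_left (hmax y hy) (le_of_lt hNR)
  have hu'uniq : ∀ y ∈ polarDual Q, u' ⬝ᵥ y = u' ⬝ᵥ v → y = v := fun y hy heq => by
    rw [hu'dot, hu'dot] at heq
    exact huniq2 y hy (mul_left_cancel₀ (ne_of_gt hNR) heq)
  have hfv : suppF Q u' = u' ⬝ᵥ v :=
    le_antisymm (suppF_le hr hball hu'max) (suppF_ge hr hball u' hvK')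
  obtain ⟨M, hM⟩ := hfint u
  -- Gap property
  have hgap : ∀ ε : ℝ, 0 < ε → ∃ δ : ℝ, 0 < δ ∧ ∀ y ∈ polarDual Q, ε ≤ dist y v →
      u' ⬝ᵥ y ≤ u' ⬝ᵥ v - δ := by
    intro ε hε
    set Kε := polarDual Q ∩ {y : Fin d → ℝ | ε ≤ dist y v} with hKε
    rcases Set.eq_empty_or_nonempty Kε with hemp | hne
    · refine ⟨1, one_pos, fun y hy hd => ?_⟩
      have hmem : y ∈ Kε := ⟨hy, hd⟩
      rw [hemp] at hmem
      exact absurd hmem (Set.notMem_empty y)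
    · have hKεc : IsCompact Kε := (polar_compact hr hball).inter_right
        (isClosed_le continuous_const (Continuous.dist continuous_id continuous_const))
      have hcont : ContinuousOn (fun y : Fin d → ℝ => u' ⬝ᵥ y) Kε :=
        (continuous_finset_sum _ fun i _ => continuous_const.mul (continuous_apply i)).continuousOn
      obtain ⟨y₀, hy₀, hy₀max⟩ := hKεc.exists_isMaxOn hne hcont
      have hy₀K : y₀ ∈ polarDual Q := hy₀.1
      have hy₀v : y₀ ≠ v := by
        intro h
        have h2 := hy₀.2
        rw [h] at h2
        simp only [Set.mem_setOf_eq, dist_self] at h2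
        linarith
      have hlt : u' ⬝ᵥ y₀ < u' ⬝ᵥ v :=
        lt_of_le_of_ne (hu'max _ hy₀K) (fun h => hy₀v (hu'uniq _ hy₀K h))
      refine ⟨u' ⬝ᵥ v - u' ⬝ᵥ y₀, by linarith, fun y hy hd => ?_⟩
      have h3 : u' ⬝ᵥ y ≤ u' ⬝ᵥ y₀ := hy₀max (⟨hy, hd⟩ : y ∈ Kε)
      linarith
  -- Each coordinate of v is an integer
  have hcoord : ∀ j : Fin d, ∃ z : ℤ, v j = z := by
    intro j
    apply exists_int_of_forall_near
    intro ε hε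
    obtain ⟨δ, hδ, hgapε⟩ := hgap ε hε
    set C := 2 / r with hC
    have hCb : ∀ y ∈ polarDual Q, ‖y‖ ≤ C := polar_bounded hr hball
    obtain ⟨t, ht⟩ := exists_nat_ge ((C + |v j| + ε) / δ)
    have htδ : C + |v j| + ε ≤ t * δ := by
      rw [div_le_iff₀ hδ] at ht; linarith
    set wz : Fin d → ℤ := t • u + Pi.single j 1 with hwz
    have hlw : latCast wz = (t:ℝ) • u' + Pi.single j (1:ℝ) := by
      rw [hwz, latCast_add, latCast_nsmul, latCast_single, hu']
    obtain ⟨F, hF⟩ := hfint wz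
    have hFlow : (t:ℝ) * (u' ⬝ᵥ v) + v j ≤ F := by
      have h1 := suppF_ge hr hball (latCast wz) hvK'
      rw [hF, hlw, add_dotProduct, smul_dotProduct, smul_eq_mul,
        single_dotProduct, one_mul] at h1
      exact h1
    have hFup : (F:ℝ) ≤ (t:ℝ) * (u' ⬝ᵥ v) + v j + ε := by
      obtain ⟨y, hyK, hyval⟩ := suppF_attain hr hball (latCast wz)
      rw [hF, hlw, add_dotProduct, smul_dotProduct, smul_eq_mul,
        single_dotProduct, one_mul] at hyval
      have ht0 : (0:ℝ) ≤ t := Nat.cast_nonneg t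
      rcases lt_or_ge (dist y v) ε with hcase | hcase
      · have h2 : u' ⬝ᵥ y ≤ u' ⬝ᵥ v := hu'max y hyK
        have h3 : y j - v j ≤ |y j - v j| := le_abs_self _
        have h4 : |y j - v j| ≤ dist y v := by
          rw [dist_eq_norm]
          have h5 := norm_le_pi_norm (y - v) j
          simpa [Real.norm_eq_abs] using h5
        rw [hyval]
        nlinarith
      · have h2 : u' ⬝ᵥ y ≤ u' ⬝ᵥ v - δ := hgapε y hyK hcase
        have h3 : y j ≤ C := le_trans (le_trans (le_abs_self _)
          (by simpa [Real.norm_eq_abs] using norm_le_pi_norm y j)) (hCb y hyK)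
        have h5 : -|v j| ≤ v j := neg_abs_le _
        rw [hyval]
        nlinarith
    refine ⟨F - t * M, ?_⟩
    have hMv : (M:ℝ) = u' ⬝ᵥ v := by rw [← hM, ← hu', hfv]
    have hcast : ((F - t * M : ℤ) : ℝ) = (F:ℝ) - (t:ℝ) * (M:ℝ) := by push_cast; ring
    rw [hcast, hMv, abs_le]
    constructor <;> linarith
  choose zf hzf using hcoord
  exact ⟨zf, funext fun j => (hzf j).symm⟩

end HibiAux

namespace HibiAux

open Set Matrix

variable {d : ℕ}

lemma backward_direction (P S : Set (Fin d → ℝ)) (hSfin : S.Finite)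
    (hSrat : ∀ x ∈ S, ∀ i, ∃ q : ℚ, x i = q)
    (hP : P = convexHull ℝ S) (hfull : (interior P).Nonempty)
    (h : ∀ n : ℕ, Set.ncard {x : Fin d → ℤ | latCast x ∈ (n : ℝ) • P} =
      Set.ncard {x : Fin d → ℤ | latCast x ∈ interior (((n : ℝ) + 1) • P)}) :
    ∃ (p : Fin d → ℤ) (W : Finset (Fin d → ℤ)),
      polarDual ((fun x => x - latCast p) '' P) = convexHull ℝ (latCast '' ↑W) := by
  classical
  have hPc : IsCompact P := hP ▸ hSfin.isCompact_convexHull (𝕜 := ℝ)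
  have hPconv : Convex ℝ P := hP ▸ convex_convexHull ℝ S
  have hPne : P.Nonempty := hfull.mono interior_subset
  -- the case n = 0 gives a unique interior lattice point
  have h0 := h 0
  have hLHS : {x : Fin d → ℤ | latCast x ∈ ((0:ℕ) : ℝ) • P} = {(0 : Fin d → ℤ)} := by
    ext x
    rw [Set.mem_setOf_eq, Nat.cast_zero, Set.zero_smul_set hPne]
    simp only [Set.mem_singleton_iff]
    constructor
    · intro hx
      have : latCast x = 0 := by simpa using hx
      have := latCast_injective (this.trans latCast_zero.symm)
      exact this
    · rintro rfl
      simp [latCast_zero]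
  have hone : (((0:ℕ) : ℝ) + 1) • P = P := by
    norm_num
  rw [hLHS, Set.ncard_singleton, hone] at h0
  obtain ⟨p, hp⟩ := Set.ncard_eq_one.mp h0.symm
  have hpP : latCast p ∈ interior P := by
    have : p ∈ {x : Fin d → ℤ | latCast x ∈ interior P} := by rw [hp]; rfl
    exact this
  -- translate
  set a : Fin d → ℝ := latCast p with hadef
  set Q : Set (Fin d → ℝ) := (fun x => x - a) '' P with hQdef
  have hQc : IsCompact Q := image_sub_compact hPc a
  have hQconv : Convex ℝ Q := image_sub_convex hPconv a
  have h0Q : 0 ∈ interior Q := by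
    rw [hQdef, interior_image_sub]
    exact ⟨a, hpP, sub_self a⟩
  obtain ⟨r, hr, hball⟩ := Metric.mem_nhds_iff.mp (mem_interior_iff_mem_nhds.mp h0Q)
  obtain ⟨R₀, hRsub⟩ := hQc.isBounded.subset_closedBall 0
  set R : ℝ := max R₀ 1 with hRdef
  have hR : 0 < R := lt_of_lt_of_le one_pos (le_max_right _ _)
  have hQR : ∀ q ∈ Q, ‖q‖ ≤ R := by
    intro q hq
    have := hRsub hq
    rw [Metric.mem_closedBall, dist_zero_right] at this
    exact this.trans (le_max_left _ _)
  -- the counting hypothesis transfers to Q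
  have hcount : ∀ n : ℕ, Set.ncard {x : Fin d → ℤ | latCast x ∈ (n : ℝ) • Q} =
      Set.ncard {x : Fin d → ℤ | latCast x ∈ interior (((n : ℝ) + 1) • Q)} := by
    intro n
    rw [hQdef, count_smul_transfer p P n, count_interior_transfer p P n]
    exact h n
  -- set equality for every n
  have hseteq : ∀ n : ℕ, {x : Fin d → ℤ | suppF Q (latCast x) ≤ (n : ℝ)} =
      {x : Fin d → ℤ | suppF Q (latCast x) < (n : ℝ) + 1} := by
    intro n
    refine Set.eq_of_subset_of_ncard_le ?_ ?_ ?_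
    · intro x hx
      have : suppF Q (latCast x) ≤ (n:ℝ) := hx
      show suppF Q (latCast x) < (n:ℝ) + 1
      linarith
    · rw [← lattice_smul_char hQc hQconv hr hball hR hQR n,
        ← lattice_interior_char hQc hQconv hr hball hR hQR n]
      exact le_of_eq (hcount n).symm
    · exact lattice_suppF_lt_finite hr hball hR hQR ((n:ℝ)+1)
  -- the support function is integer-valued on the lattice
  have hfint : ∀ x : Fin d → ℤ, ∃ m : ℤ, suppF Q (latCast x) = m := by
    intro x
    set f := suppF Q (latCast x) with hf
    have hf0 : 0 ≤ f := suppF_nonneg hr hball _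
    set n₀ : ℕ := ⌊f⌋₊ with hn₀
    have hle : (n₀ : ℝ) ≤ f := Nat.floor_le hf0
    have hlt : f < n₀ + 1 := Nat.lt_floor_add_one f
    have hxB : x ∈ {x : Fin d → ℤ | suppF Q (latCast x) < (n₀ : ℝ) + 1} := hlt
    rw [← hseteq n₀] at hxB
    have : f ≤ (n₀ : ℝ) := hxB
    exact ⟨(n₀ : ℤ), by push_cast; linarith⟩
  -- rational generating set of Q
  set S₁ : Set (Fin d → ℝ) := (fun x => x - a) '' S with hS₁def
  have hS₁fin : S₁.Finite := hSfin.image _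
  have hS₁rat : ∀ s ∈ S₁, ∀ i, ∃ q : ℚ, s i = q := by
    rintro - ⟨s, hs, rfl⟩ i
    obtain ⟨q, hq⟩ := hSrat s hs i
    refine ⟨q - (p i : ℚ), ?_⟩
    show s i - a i = ((q - (p i : ℚ) : ℚ) : ℝ)
    have ha : a i = ((p i : ℤ) : ℝ) := rfl
    rw [hq, ha]
    push_cast
    ring
  have hQhull : Q = convexHull ℝ S₁ := by
    have hfun : (fun x : Fin d → ℝ => x - a) =
        ⇑((AffineEquiv.vaddConst ℝ (-a)).toAffineMap) := by
      funext x
      show x - a = x +ᵥ (-a)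
      rw [vadd_eq_add, sub_eq_add_neg]
    rw [hQdef, hS₁def, hP, hfun]
    exact AffineMap.image_convexHull _ S
  have hpolar : polarDual Q = polarDual S₁ := by
    rw [hQhull, polar_convexHull]
  -- lattice points of the polar dual
  have hKfin : {x : Fin d → ℤ | latCast x ∈ polarDual Q}.Finite :=
    finite_lattice_of_bounded (R := 2/r) (polar_bounded hr hball)
  set W : Finset (Fin d → ℤ) := hKfin.toFinset with hW
  refine ⟨p, W, ?_⟩
  have hKcomp : IsCompact (polarDual Q) := polar_compact hr hball
  have hsub1 : convexHull ℝ (latCast '' ↑W) ⊆ polarDual Q := by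
    refine convexHull_min ?_ (polar_convex Q)
    rintro - ⟨w, hw, rfl⟩
    exact hKfin.mem_toFinset.mp hw
  have hsub2 : polarDual Q ⊆ convexHull ℝ (latCast '' ↑W) := by
    have hKM := closure_convexHull_extremePoints hKcomp (polar_convex Q)
    have hext : Set.extremePoints ℝ (polarDual Q) ⊆ latCast '' ↑W := by
      intro v hv
      obtain ⟨xv, hxv⟩ := extreme_integral hS₁fin hS₁rat hpolar hr hball hfint hv
      have hvK : v ∈ polarDual Q := hv.1
      refine ⟨xv, ?_, hxv⟩
      rw [hW, Set.Finite.coe_toFinset]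
      show latCast xv ∈ polarDual Q
      rw [hxv]; exact hvK
    have hcl : IsClosed (convexHull ℝ (latCast '' (↑W : Set (Fin d → ℤ)))) :=
      (((W.finite_toSet).image latCast).isCompact_convexHull (𝕜 := ℝ)).isClosed
    calc polarDual Q = closure (convexHull ℝ (Set.extremePoints ℝ (polarDual Q))) := hKM.symm
      _ ⊆ closure (convexHull ℝ (latCast '' ↑W)) :=
          closure_mono (convexHull_mono hext)
      _ = convexHull ℝ (latCast '' ↑W) := hcl.closure_eq
  rw [show (fun x => x - latCast p) '' P = Q from rfl]
  exact Set.Subset.antisymm hsub2 hsub1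

end HibiAux

open HibiAux in
/-- (Hibi) A full-dimensional rational convex polytope `P ⊆ ℝ^d` is dual-integral
(there is a lattice point `p` such that `(P - p)*` is a lattice polytope) if and only
if `#(nP ∩ ℤ^d) = #(int((n+1)P) ∩ ℤ^d)` for all natural numbers `n`. -/
theorem hibi_dualIntegral_iff {d : ℕ}
    (P : Set (Fin d → ℝ)) (S : Set (Fin d → ℝ)) (hSfin : S.Finite)
    (hSrat : ∀ x ∈ S, ∀ i, ∃ q : ℚ, x i = q)
    (hP : P = convexHull ℝ S)
    (hfull : (interior P).Nonempty) :
    (∃ (p : Fin d → ℤ) (W : Finset (Fin d → ℤ)),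
        polarDual ((fun x => x - latCast p) '' P) = convexHull ℝ (latCast '' ↑W)) ↔
      ∀ n : ℕ, Set.ncard {x : Fin d → ℤ | latCast x ∈ (n : ℝ) • P} =
        Set.ncard {x : Fin d → ℤ | latCast x ∈ interior (((n : ℝ) + 1) • P)} := by
  constructor
  · rintro ⟨p, W, hpol⟩
    exact forward_direction P S hSfin hP hfull p W hpol
  · intro h
    exact backward_direction P S hSfin hSrat hP hfull h
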